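/- Every locally optimal solution (x*, v*) of the MPEC problem min { ⟨e, e − v⟩ : ‖Ax − b‖ ≤ δ, ⟨v, |x|⟩ = 0, 0 ≤ v ≤ e, (x, v) ∈ ℝⁿ × ℝⁿ } satisfies v* = e − sign(|x*|), i.e., v*ᵢ = 0 if x*ᵢ ≠ 0 and v*ᵢ = 1 if x*ᵢ = 0. -/

import Mathlib

/-- The Euclidean norm of a vector in `ℝᵐ`. -/
noncomputable def enorm {m : ℕ} (u : Fin m → ℝ) : ℝ := Real.sqrt (∑ i, u i ^ 2)

/-- Feasibility for the MPEC problem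
`min { ⟨e, e − v⟩ : ‖Ax − b‖ ≤ δ, ⟨v, |x|⟩ = 0, 0 ≤ v ≤ e }`. -/
noncomputable def MPECFeasible {m n : ℕ} (A : Matrix (Fin m) (Fin n) ℝ) (b : Fin m → ℝ)
    (δ : ℝ) (x v : Fin n → ℝ) : Prop :=
  _root_.enorm (A.mulVec x - b) ≤ δ ∧ (∑ i, v i * |x i|) = 0 ∧ ∀ i, 0 ≤ v i ∧ v i ≤ 1

/-- every locally optimal solution `(x*, v*)` of the MPEC problem satisfies
`v* = e − sign(|x*|)`, i.e. `v*ᵢ = 0` if `x*ᵢ ≠ 0` and `v*ᵢ = 1` if `x*ᵢ = 0`. -/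
theorem mpec_local_opt_form {m n : ℕ} (A : Matrix (Fin m) (Fin n) ℝ) (b : Fin m → ℝ)
    (δ : ℝ) (hδ : 0 ≤ δ) (xs vs : Fin n → ℝ)
    (hfeas : MPECFeasible A b δ xs vs)
    (hloc : ∃ ε > (0 : ℝ), ∀ x v : Fin n → ℝ, MPECFeasible A b δ x v →
      _root_.enorm (x - xs) < ε → _root_.enorm (v - vs) < ε →
      (∑ i, (1 - vs i)) ≤ ∑ i, (1 - v i)) :
    vs = fun i => if xs i = 0 then 1 else 0 := by
  obtain ⟨hAx, hsum, hbox⟩ := hfeas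
  obtain ⟨ε, hε, hopt⟩ := hloc
  have hterm : ∀ j : Fin n, vs j * |xs j| = 0 := by
    intro j
    have hnn : ∀ k ∈ Finset.univ, (0:ℝ) ≤ vs k * |xs k| :=
      fun k _ => mul_nonneg (hbox k).1 (abs_nonneg _)
    exact (Finset.sum_eq_zero_iff_of_nonneg hnn).1 hsum j (Finset.mem_univ j)
  funext i
  by_cases hx : xs i = 0
  · simp only [hx, if_pos]
    by_contra hne
    have hlt : vs i < 1 := lt_of_le_of_ne (hbox i).2 hne
    set t := min (ε/2) (1 - vs i) with ht
    have ht0 : 0 < t := lt_min (by linarith) (by linarith)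
    have htε : t < ε := lt_of_le_of_lt (min_le_left _ _) (by linarith)
    set v' := fun j => if j = i then vs i + t else vs j with hv'
    have hfeas' : MPECFeasible A b δ xs v' := by
      refine ⟨hAx, ?_, ?_⟩
      · rw [← hsum]
        apply Finset.sum_congr rfl
        intro j _
        by_cases hj : j = i
        · subst hj; simp [hv', hx]
        · simp [hv', hj]
      · intro j
        by_cases hj : j = i
        · subst hj
          have h1 := (hbox j).1
          have h2 : t ≤ 1 - vs j := min_le_right _ _
          simp only [hv', if_pos rfl]
          constructor <;> linarith
        · simp only [hv', if_neg hj]; exact hbox j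
    have hx0 : _root_.enorm (xs - xs) < ε := by
      have : _root_.enorm (xs - xs) = 0 := by
        simp [_root_.enorm]
      linarith
    have hv0 : _root_.enorm (v' - vs) < ε := by
      have hsumsq : (∑ j, ((v' - vs) j) ^ 2) = t ^ 2 := by
        rw [Finset.sum_eq_single i]
        · simp [hv']
        · intro j _ hj
          simp [hv', hj]
        · intro h; exact absurd (Finset.mem_univ i) h
      have : _root_.enorm (v' - vs) = t := by
        rw [_root_.enorm, hsumsq, Real.sqrt_sq ht0.le]
      linarith
    have hle := hopt xs v' hfeas' hx0 hv0
    have hsum' : (∑ j, (1 - v' j)) = (∑ j, (1 - vs j)) - t := by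
      have : (∑ j, (1 - v' j)) = ∑ j, ((1 - vs j) - (if j = i then t else 0)) := by
        apply Finset.sum_congr rfl
        intro j _
        by_cases hj : j = i
        · subst hj; simp [hv']; ring
        · simp [hv', hj]
      rw [this, Finset.sum_sub_distrib, Finset.sum_ite_eq' Finset.univ i (fun _ => t)]
      simp
    rw [hsum'] at hle
    linarith
  · simp only [hx, if_neg]
    have habs : 0 < |xs i| := abs_pos.2 hx
    have := hterm i
    rcases mul_eq_zero.1 this with h | h
    · exact h
    · exact absurd h (ne_of_gt habs)
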